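/- If Eve has a winning strategy in a parity game G with priority co-domain I starting at v, and 2i is the largest even priority in I, then for every k ≥ i, Eve has a winning strategy in the k-register game on G from v. -/
import Mathlib


/-- A parity game arena with priorities on edges. `owner v = true` means the
position belongs to Eve; `edge v p w` means there is an edge from `v` to `w`
carrying priority `p`. -/
structure PGame (V : Type) where
  owner : V → Bool
  edge : V → ℕ → V → Prop

/-- The priority `p` occurs infinitely often in the priority sequence `c`. -/
def InfOcc (c : ℕ → ℕ) (p : ℕ) : Prop := ∀ n, ∃ i, n ≤ i ∧ c i = p

/-- Eve wins a play whose sequence of traversed priorities is `c` iff the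
largest priority occurring infinitely often is even. -/
def EveWinsPlay (c : ℕ → ℕ) : Prop :=
  ∃ p, InfOcc c p ∧ Even p ∧ ∀ q, InfOcc c q → q ≤ p

/-- `π` (positions) together with `c` (priorities) forms a play of `G`. -/
def IsPlay {V : Type} (G : PGame V) (π : ℕ → V) (c : ℕ → ℕ) : Prop :=
  ∀ i, G.edge (π i) (c i) (π (i + 1))

/-- A (history-dependent) strategy: given the history of previously visited
positions and the current position, it picks an outgoing edge (priority and
successor). -/
structure Strategy {V : Type} (G : PGame V) where
  next : List V → V → ℕ × V
  valid : ∀ l v, G.edge v (next l v).1 (next l v).2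

def histUpTo {V : Type} (π : ℕ → V) (i : ℕ) : List V := List.ofFn (fun j : Fin i => π j)

/-- The play `(π, c)` agrees with the strategy `σ` of player `b`. -/
def Agrees {V : Type} (G : PGame V) (b : Bool) (σ : Strategy G) (π : ℕ → V) (c : ℕ → ℕ) : Prop :=
  ∀ i, G.owner (π i) = b → (c i, π (i + 1)) = σ.next (histUpTo π i) (π i)

/-- Player `b` (`true` = Eve, `false` = Adam) has a winning strategy from `v`. -/
def WinsFrom {V : Type} (G : PGame V) (b : Bool) (v : V) : Prop :=
  ∃ σ : Strategy G, ∀ π c, IsPlay G π c → π 0 = v → Agrees G b σ π c →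
    (if b = true then EveWinsPlay c else ¬ EveWinsPlay c)

/-- Register update: registers below `i` are reset to `0`, register `i` is set
to `p`, registers above `i` become `max (r j) p`. -/
def newReg {k : ℕ} (r : Fin (k + 1) → ℕ) (i : Fin (k + 1)) (p : ℕ) : Fin (k + 1) → ℕ :=
  fun j => if j < i then 0 else if j = i then p else max (r j) p

/-- Output produced when Eve chooses register `i` upon seeing priority `p`. -/
def outE {k : ℕ} (r : Fin (k + 1) → ℕ) (i : Fin (k + 1)) (p : ℕ) : ℕ :=
  if Even (max (r i) p) then 2 * i.1 else 2 * i.1 + 1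

/-- Output produced when Adam chooses register `i` (Adam-controlled variant). -/
def outA {k : ℕ} (r : Fin (k + 1) → ℕ) (i : Fin (k + 1)) (p : ℕ) : ℕ :=
  if Even (r i) then 2 * i.1 + 2 else 2 * i.1 + 1

/-- Positions of the `k`-register game: a position of `G`, the register
contents, and `none` (a move of `G` is next) or `some p` (the register
controller must choose a register, `p` being the priority just seen). -/
abbrev RegPos (V : Type) (k : ℕ) : Type := V × (Fin (k + 1) → ℕ) × Option ℕ

/-- The `k`-register game on `G` in which Eve controls the registers. -/
def regGameE {V : Type} (G : PGame V) (k : ℕ) : PGame (RegPos V k) where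
  owner := fun s => match s.2.2 with
    | none => G.owner s.1
    | some _ => true
  edge := fun s o s' => match s, s' with
    | (v, r, none), (w, r', some p) => G.edge v p w ∧ r' = r ∧ o = 0
    | (v, r, some p), (w, r', none) => w = v ∧ ∃ i, r' = newReg r i p ∧ o = outE r i p
    | _, _ => False

/-- The `k`-register game on `G` in which Adam controls the registers. -/
def regGameA {V : Type} (G : PGame V) (k : ℕ) : PGame (RegPos V k) where
  owner := fun s => match s.2.2 with
    | none => G.owner s.1
    | some _ => false
  edge := fun s o s' => match s, s' with
    | (v, r, none), (w, r', some p) => G.edge v p w ∧ r' = r ∧ o = 0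
    | (v, r, some p), (w, r', none) => w = v ∧ ∃ i, r' = newReg r i p ∧ o = outA r i p
    | _, _ => False

/-! Auxiliary definitions for the proof of `stmt1`. -/

def extrE {α : Type _} : List α → List α
  | [] => []
  | [a] => [a]
  | a :: _ :: rest => a :: extrE rest

lemma extrE_append {α : Type _} (a b : α) :
    ∀ l : List α, l.length % 2 = 0 → extrE (l ++ [a, b]) = extrE l ++ [a]
  | [], _ => rfl
  | [x], h => by simp at h
  | x :: y :: rest, h => by
    have h' : rest.length % 2 = 0 := by simp [List.length_cons] at h; omega
    have ih := extrE_append a b rest h'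
    show x :: extrE (rest ++ [a, b]) = (x :: extrE rest) ++ [a]
    rw [ih]; rfl

/-- Extract the underlying `G`-history from a register-game history. -/
def extract {V : Type} {k : ℕ} (l : List (RegPos V k)) : List V :=
  (extrE (if l.length % 2 = 0 then l else l.tail)).map Prod.fst

lemma extract_append {V : Type} {k : ℕ} (l : List (RegPos V k)) (a b : RegPos V k) :
    extract (l ++ [a, b]) = extract l ++ [a.1] := by
  unfold extract
  have hl2 : (l ++ [a, b]).length % 2 = l.length % 2 := by
    simp [List.length_append, Nat.add_mod]
  by_cases h : l.length % 2 = 0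
  · rw [if_pos (by rw [hl2]; exact h), if_pos h, extrE_append a b l h]
    simp
  · rw [if_neg (by rw [hl2]; exact h), if_neg h]
    cases l with
    | nil => simp at h
    | cons x xs =>
      have hx : xs.length % 2 = 0 := by simp [List.length_cons] at h; omega
      simp only [List.cons_append, List.tail_cons, extrE_append a b xs hx]
      simp

lemma histUpTo_succ {V : Type} (π : ℕ → V) (n : ℕ) :
    histUpTo π (n + 1) = histUpTo π n ++ [π n] := by
  simp only [histUpTo, List.ofFn_succ', List.concat_eq_append, Fin.coe_castSucc, Fin.val_last]

/-- Eve's register choice: register `⌊p/2⌋`, capped at `k`. -/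
def chF (k p : ℕ) : Fin (k + 1) := ⟨min (p / 2) k, Nat.lt_succ_of_le (min_le_right _ _)⟩

/-- Eve's strategy in the register game, built from her strategy `σ` in `G`. -/
def evStrat {V : Type} (G : PGame V) (k : ℕ) (σ : Strategy G) : Strategy (regGameE G k) where
  next := fun l s =>
    match s with
    | (u, r, none) => (0, ((σ.next (extract l) u).2, r, some (σ.next (extract l) u).1))
    | (u, r, some p) => (outE r (chF k p) p, (u, newReg r (chF k p) p, none))
  valid := by
    rintro l ⟨u, r, t⟩
    cases t with
    | none => exact ⟨σ.valid _ _, rfl, rfl⟩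
    | some p => exact ⟨rfl, chF k p, rfl, rfl⟩

/-- If Eve has a winning strategy in a parity game `G` whose
priority co-domain has largest even priority `2 * i` (so all priorities are at
most `2 * i + 1`) starting at `v`, then for every `k ≥ i` Eve has a winning
strategy in the `k`-register game on `G` from `v` (from every register
configuration). -/
theorem stmt1 {V : Type} (G : PGame V) (v : V) (i : ℕ)
    (hI : ∀ u p w, G.edge u p w → p ≤ 2 * i + 1)
    (h : WinsFrom G true v) (k : ℕ) (hk : i ≤ k)
    (r : Fin (k + 1) → ℕ) (t : Option ℕ) :
    WinsFrom (regGameE G k) true (v, r, t) := by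
  classical
  obtain ⟨σ, hσ⟩ := h
  refine ⟨evStrat G k σ, ?_⟩
  intro π c hplay h0 hagree
  simp only [if_pos rfl]
  -- Structure of moves out of a `none`-phase position.
  have edgeN : ∀ n, (π n).2.2 = none → ∃ p,
      (π (n+1)).2.2 = some p ∧ G.edge (π n).1 p (π (n+1)).1 ∧
      (π (n+1)).2.1 = (π n).2.1 ∧ c n = 0 := by
    intro n hn
    have hp := hplay n
    rcases h1 : π n with ⟨u, r1, t1⟩
    rcases h2 : π (n+1) with ⟨w, r2, t2⟩
    rw [h1] at hn hp
    rw [h2] at hp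
    simp only at hn
    subst hn
    cases t2 with
    | none => exact hp.elim
    | some p =>
      obtain ⟨he, hr, hc⟩ := hp
      exact ⟨p, rfl, he, hr, hc⟩
  -- Moves out of a `some`-phase position follow Eve's strategy.
  have agreeS : ∀ n p, (π n).2.2 = some p →
      π (n+1) = ((π n).1, newReg (π n).2.1 (chF k p) p, none) ∧
      c n = outE (π n).2.1 (chF k p) p := by
    intro n p hn
    rcases h1 : π n with ⟨u, r1, t1⟩
    rw [h1] at hn
    simp only at hn
    subst hn
    have hown : (regGameE G k).owner (π n) = true := by rw [h1]; rfl
    have ha := hagree n hown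
    rw [h1] at ha
    have ha2 : (c n, π (n+1)) = (outE r1 (chF k p) p, (u, newReg r1 (chF k p) p, none)) := ha
    exact ⟨congrArg Prod.snd ha2, congrArg Prod.fst ha2⟩
  -- Starting offset δ: the first `none`-phase position.
  obtain ⟨δ, hδle, hv, hphδ⟩ : ∃ δ, δ ≤ 1 ∧ (π δ).1 = v ∧ (π δ).2.2 = none := by
    cases t with
    | none => exact ⟨0, by norm_num, by rw [h0], by rw [h0]⟩
    | some p =>
      have h1 : π 1 = ((π 0).1, newReg (π 0).2.1 (chF k p) p, none) :=
        (agreeS 0 p (by rw [h0])).1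
      exact ⟨1, le_refl 1, by rw [h1, h0], by rw [h1]⟩
  -- All positions at indices `2*j + δ` are `none`-phase.
  have phase : ∀ j, (π (2*j+δ)).2.2 = none := by
    intro j
    induction j with
    | zero => simpa using hphδ
    | succ j ih =>
      obtain ⟨p, hp, -, -, -⟩ := edgeN _ ih
      have h1 := (agreeS (2*j+δ+1) p hp).1
      have e : 2*(j+1)+δ = (2*j+δ+1)+1 := by ring
      rw [e, h1]
  -- The combined structure of one full round.
  have main : ∀ j, ∃ p,
      (π (2*j+δ+1)).2.2 = some p ∧
      G.edge (π (2*j+δ)).1 p (π (2*j+δ+1)).1 ∧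
      c (2*j+δ) = 0 ∧
      π (2*j+δ+2) = ((π (2*j+δ+1)).1, newReg ((π (2*j+δ)).2.1) (chF k p) p, none) ∧
      c (2*j+δ+1) = outE ((π (2*j+δ)).2.1) (chF k p) p := by
    intro j
    obtain ⟨p, hp, he, hr, hc⟩ := edgeN (2*j+δ) (phase j)
    obtain ⟨hnext, hcout⟩ := agreeS (2*j+δ+1) p hp
    rw [hr] at hnext hcout
    exact ⟨p, hp, he, hc, hnext, hcout⟩
  choose cG hsome hedge hc0 hnext hcout using main
  -- Basic consequences.
  have hπG1 : ∀ j, (π (2*(j+1)+δ)).1 = (π (2*j+δ+1)).1 := by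
    intro j
    have e : 2*(j+1)+δ = 2*j+δ+2 := by ring
    rw [e, hnext j]
  have hRnext : ∀ j, (π (2*(j+1)+δ)).2.1 = newReg ((π (2*j+δ)).2.1) (chF k (cG j)) (cG j) := by
    intro j
    have e : 2*(j+1)+δ = 2*j+δ+2 := by ring
    rw [e, hnext j]
  have hGplay : IsPlay G (fun j => (π (2*j+δ)).1) cG := by
    intro j
    show G.edge (π (2*j+δ)).1 (cG j) (π (2*(j+1)+δ)).1
    rw [hπG1 j]
    exact hedge j
  -- Histories in the register game project to histories in `G`.
  have hist : ∀ j, extract (histUpTo π (2*j+δ)) = histUpTo (fun j => (π (2*j+δ)).1) j := by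
    intro j
    induction j with
    | zero =>
      interval_cases δ
      · simp [histUpTo, extract, extrE]
      · simp [histUpTo, extract, extrE, List.ofFn_succ]
    | succ j ih =>
      have e1 : histUpTo π (2*(j+1)+δ) = histUpTo π (2*j+δ) ++ [π (2*j+δ), π (2*j+δ+1)] := by
        rw [show 2*(j+1)+δ = (2*j+δ+1)+1 by ring, histUpTo_succ, histUpTo_succ]
        simp
      rw [e1, extract_append, ih, histUpTo_succ]
  -- The projected play agrees with σ.
  have hGagree : Agrees G true σ (fun j => (π (2*j+δ)).1) cG := by
    intro j hown
    simp only at hown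
    have hph := phase j
    rcases h1 : π (2*j+δ) with ⟨u, r1, t1⟩
    rw [h1] at hph
    simp only at hph
    subst hph
    rw [h1] at hown
    simp only at hown
    have hown' : (regGameE G k).owner (π (2*j+δ)) = true := by
      rw [h1]; simpa [regGameE] using hown
    have ha := hagree (2*j+δ) hown'
    rw [h1] at ha
    have ha2 : (c (2*j+δ), π (2*j+δ+1)) =
        (0, ((σ.next (extract (histUpTo π (2*j+δ))) u).2, r1,
          some (σ.next (extract (histUpTo π (2*j+δ))) u).1)) := ha
    have h2 := congrArg Prod.snd ha2
    simp only at h2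
    have hcj : (σ.next (extract (histUpTo π (2*j+δ))) u).1 = cG j := by
      have hc := hsome j
      rw [h2] at hc
      simpa using hc
    have hpos : (π (2*(j+1)+δ)).1 = (σ.next (extract (histUpTo π (2*j+δ))) u).2 := by
      rw [hπG1 j, h2]
    show (cG j, (π (2*(j+1)+δ)).1) = σ.next (histUpTo (fun j => (π (2*j+δ)).1) j) (π (2*j+δ)).1
    rw [← hist j, h1, hpos, ← hcj]
  -- Eve wins the projected play.
  have hwin : EveWinsPlay cG := by
    have := hσ _ _ hGplay (by simpa using hv) hGagree
    simpa using this
  obtain ⟨P, hPinf, hPeven, hPmax⟩ := hwin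
  have hbound : ∀ j, cG j ≤ 2*i+1 := fun j => hI _ _ _ (hedge j)
  -- Beyond some index N, all priorities of the projected play are ≤ P.
  have hfin : ∀ q, P < q → ∃ n, ∀ j, n ≤ j → cG j ≠ q := by
    intro q hq
    by_contra hcon
    push_neg at hcon
    exact absurd (hPmax q fun n => hcon n) (by omega)
  choose f hf using hfin
  set N : ℕ := Finset.sup (Finset.range (2*i+2)) (fun q => if h : P < q then f q h else 0) with hN
  have hNle : ∀ j, N ≤ j → cG j ≤ P := by
    intro j hj
    by_contra hlt
    push_neg at hlt
    have h1 : cG j < 2*i+2 := by have := hbound j; omega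
    have h2 : (if h : P < cG j then f (cG j) h else 0) ≤ N := by
      rw [hN]
      exact Finset.le_sup (f := fun q => if h : P < q then f q h else 0)
        (Finset.mem_range.mpr h1)
    rw [dif_pos hlt] at h2
    exact hf (cG j) hlt j (le_trans h2 hj) rfl
  have hP2 : P % 2 = 0 := Nat.even_iff.mp hPeven
  obtain ⟨j1, -, hj1⟩ := hPinf 0
  have hPle : P ≤ 2*i + 1 := hj1 ▸ hbound j1
  set m : ℕ := P / 2 with hm
  have hmP : 2 * m = P := by omega
  have hmk : m ≤ k := by omega
  set M : Fin (k+1) := ⟨m, Nat.lt_succ_of_le hmk⟩ with hM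
  obtain ⟨j0, hj0N, hj0P⟩ := hPinf N
  have hch_le : ∀ j, N ≤ j → (chF k (cG j)).1 ≤ m := by
    intro j hj
    have := hNle j hj
    simp only [chF]
    omega
  have hch_eq : ∀ j, cG j = P → chF k (cG j) = M := by
    intro j hj
    apply Fin.ext
    simp only [chF, hM, hj]
    omega
  -- After round j0, register m permanently contains P.
  have hinv : ∀ j, j0 + 1 ≤ j → (π (2*j+δ)).2.1 M = P := by
    intro j hj
    induction j, hj using Nat.le_induction with
    | base =>
      rw [hRnext j0, hch_eq j0 hj0P, hj0P]
      simp [newReg]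
    | succ j hj ih =>
      rw [hRnext j]
      have hle := hch_le j (by omega)
      have hcle := hNle j (by omega)
      unfold newReg
      have h1 : ¬ (M < chF k (cG j)) := by
        simp only [Fin.lt_def, hM]
        omega
      rw [if_neg h1]
      by_cases h2 : M = chF k (cG j)
      · rw [if_pos h2]
        have hv2 : (chF k (cG j)).1 = m := by rw [← h2]
        simp only [chF] at hv2
        omega
      · rw [if_neg h2, ih]
        omega
  -- Bounding the outputs after round j0.
  have hc_le : ∀ j, j0 + 1 ≤ j → c (2*j+δ+1) ≤ P := by
    intro j hj
    rw [hcout j]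
    have hle := hch_le j (by omega)
    unfold outE
    split
    · omega
    · rename_i hodd
      by_cases hcm : (chF k (cG j)).1 = m
      · exfalso
        have he : chF k (cG j) = M := Fin.ext (by rw [hcm])
        rw [he, hinv j hj] at hodd
        apply hodd
        rw [max_eq_left (hNle j (by omega))]
        exact hPeven
      · have : (chF k (cG j)).1 < m := lt_of_le_of_ne hle hcm
        omega
  have hc_eq : ∀ j, j0 + 1 ≤ j → cG j = P → c (2*j+δ+1) = P := by
    intro j hj hcj
    rw [hcout j, hch_eq j hcj]
    unfold outE
    rw [hinv j hj, hcj, max_self, if_pos hPeven]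
    show 2 * m = P
    omega
  -- Conclude.
  refine ⟨P, ?_, hPeven, ?_⟩
  · intro n
    obtain ⟨j, hj1, hj2⟩ := hPinf (max n (j0+1))
    refine ⟨2*j+δ+1, by omega, hc_eq j (by omega) hj2⟩
  · intro q hq
    obtain ⟨n', hn1, hn2⟩ := hq (2*(j0+1)+δ)
    have hcn : c n' ≤ P := by
      rcases Nat.even_or_odd (n' - δ) with he | ho
      · obtain ⟨j, hj⟩ := he
        have e : n' = 2*j+δ := by omega
        rw [e, hc0 j]
        omega
      · obtain ⟨j, hj⟩ := ho
        have e : n' = 2*j+δ+1 := by omega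
        have hjge : j0 + 1 ≤ j := by omega
        rw [e]
        exact hc_le j hjge
    omega
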